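/- Let P = ({E_k : k ∈ K}, {M_0, M_1}) be a concurrent quantum program on ℂ^d with |K| = m and input a partial density operator ρ_0. Then P terminates in the fair schedule F (the set of all fair infinite paths) if and only if it terminates in the schedule Π^ω, where Π = { s_1σ_1s_2σ_2⋯σ_{m−1}s_m : s_1s_2⋯s_m is a permutation of K and each σ_i ∈ K* has length |σ_i| < d } and Π^ω is the set of infinite paths obtained by concatenating infinitely many elements of Π. -/

import Mathlib

open Matrix
open scoped ComplexOrder

/-- The support of a matrix `ρ`, i.e. the range (column space) of `ρ`. -/
noncomputable def matSupp {d : ℕ} (ρ : Matrix (Fin d) (Fin d) ℂ) :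
    Submodule ℂ (Fin d → ℂ) :=
  LinearMap.range ρ.mulVecLin

/-- The super-operator `F_k(ρ) = E_k(M₁ ρ M₁ᴴ)` of process `k`, where the
super-operator `E_k` has Kraus operators `E k i`. -/
noncomputable def progF {d m n : ℕ} (E : Fin m → Fin n → Matrix (Fin d) (Fin d) ℂ)
    (M₁ : Matrix (Fin d) (Fin d) ℂ) (k : Fin m)
    (ρ : Matrix (Fin d) (Fin d) ℂ) : Matrix (Fin d) (Fin d) ℂ :=
  ∑ i, E k i * (M₁ * ρ * M₁ᴴ) * (E k i)ᴴ

/-- For a finite string `f = s₁s₂⋯sₙ`, the super-operator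
`F_f = F_{sₙ} ∘ ⋯ ∘ F_{s₂} ∘ F_{s₁}` (the identity for the empty string). -/
noncomputable def progFStr {d m n : ℕ} (E : Fin m → Fin n → Matrix (Fin d) (Fin d) ℂ)
    (M₁ : Matrix (Fin d) (Fin d) ℂ) :
    List (Fin m) → Matrix (Fin d) (Fin d) ℂ → Matrix (Fin d) (Fin d) ℂ
  | [], ρ => ρ
  | k :: f, ρ => progFStr E M₁ f (progF E M₁ k ρ)

/-- The length-`N` prefix `s[N] = s₁⋯s_N` of an infinite path `s`. -/
def prefixOf {m : ℕ} (s : ℕ → Fin m) (N : ℕ) : List (Fin m) :=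
  List.ofFn fun i : Fin N => s i

/-- An infinite path is fair if every process occurs infinitely often in it. -/
def Fair {m : ℕ} (s : ℕ → Fin m) : Prop :=
  ∀ k : Fin m, ∀ N : ℕ, ∃ j ≥ N, s j = k

/-- The set `Π` of finite strings of the form `s₁σ₁s₂σ₂⋯σ_{m−1}s_m`, where
`s₁s₂⋯s_m` is a permutation of `K = {1,…,m}` and each `σᵢ` is a finite string of
length `< d`.  (The interleaved string `t i` after the last symbol is required
to be empty.) -/
def PiPieces (m d : ℕ) : Set (List (Fin m)) :=
  { f | ∃ p : Equiv.Perm (Fin m), ∃ t : Fin m → List (Fin m),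
      (∀ i, (t i).length < d) ∧ (∀ i : Fin m, (i : ℕ) = m - 1 → t i = []) ∧
      f = (List.ofFn fun i => p i :: t i).flatten }

/-- Membership in `A^ω`: the infinite path `s` is an infinite concatenation
`g₀g₁g₂⋯` of elements of `A`. -/
def InOmega {m : ℕ} (A : Set (List (Fin m))) (s : ℕ → Fin m) : Prop :=
  ∃ g : ℕ → List (Fin m), (∀ i, g i ∈ A) ∧
    ∀ N : ℕ, prefixOf s (((List.range N).map g).flatten).length
      = ((List.range N).map g).flatten

set_option linter.unusedVariables false

section TraceLemmas

variable {d e : ℕ}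

lemma traceCT_nonneg (B : Matrix (Fin e) (Fin d) ℂ) : 0 ≤ (Bᴴ * B).trace := by
  rw [Matrix.trace]
  refine Finset.sum_nonneg fun j _ => ?_
  simp only [Matrix.diag_apply, Matrix.mul_apply, Matrix.conjTranspose_apply]
  exact Finset.sum_nonneg fun i _ => star_mul_self_nonneg _

lemma traceCT_eq_zero {B : Matrix (Fin e) (Fin d) ℂ} (h : (Bᴴ * B).trace = 0) : B = 0 := by
  rw [Matrix.trace] at h
  have h1 := (Finset.sum_eq_zero_iff_of_nonneg (fun j _ => ?_)).mp h
  · ext i j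
    have h2 := h1 j (Finset.mem_univ j)
    simp only [Matrix.diag_apply, Matrix.mul_apply, Matrix.conjTranspose_apply] at h2
    have h3 := (Finset.sum_eq_zero_iff_of_nonneg (fun i _ => star_mul_self_nonneg _)).mp h2 i
      (Finset.mem_univ i)
    have h4 : star (B i j) * B i j = 0 := h3
    simp only [Matrix.zero_apply]
    rcases mul_eq_zero.mp h4 with h5 | h5
    · exact star_eq_zero.mp h5
    · exact h5
  · simp only [Matrix.diag_apply, Matrix.mul_apply, Matrix.conjTranspose_apply]
    exact Finset.sum_nonneg fun i _ => star_mul_self_nonneg _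

end TraceLemmas

lemma psd_exists_conjTranspose_mul_self {d : ℕ} {A : Matrix (Fin d) (Fin d) ℂ} (hA : A.PosSemidef) :
    ∃ B : Matrix (Fin d) (Fin d) ℂ, A = Bᴴ * B := by
  open scoped MatrixOrder in
  obtain ⟨B, rfl⟩ := CStarAlgebra.nonneg_iff_eq_star_mul_self.mp hA.nonneg
  exact ⟨B, rfl⟩

section Pair

variable {d : ℕ}

lemma psd_trace_mul_nonneg {A ρ : Matrix (Fin d) (Fin d) ℂ}
    (hA : A.PosSemidef) (hρ : ρ.PosSemidef) : 0 ≤ (A * ρ).trace := by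
  obtain ⟨C, rfl⟩ := psd_exists_conjTranspose_mul_self hA
  obtain ⟨B, rfl⟩ := psd_exists_conjTranspose_mul_self hρ
  have e : (C * Bᴴ)ᴴ * (C * Bᴴ) = B * (Cᴴ * C * Bᴴ) := by
    simp only [conjTranspose_mul, conjTranspose_conjTranspose, Matrix.mul_assoc]
  have e2 : ((C * Bᴴ)ᴴ * (C * Bᴴ)).trace = (Cᴴ * C * (Bᴴ * B)).trace := by
    rw [e, Matrix.trace_mul_comm, Matrix.mul_assoc]
  rw [← e2]
  exact traceCT_nonneg _

lemma psd_trace_mul_eq_zero_iff {A ρ : Matrix (Fin d) (Fin d) ℂ}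
    (hA : A.PosSemidef) (hρ : ρ.PosSemidef) : (A * ρ).trace = 0 ↔ ρ * A = 0 := by
  obtain ⟨C, rfl⟩ := psd_exists_conjTranspose_mul_self hA
  obtain ⟨B, rfl⟩ := psd_exists_conjTranspose_mul_self hρ
  constructor
  · intro h
    have e : (C * Bᴴ)ᴴ * (C * Bᴴ) = B * (Cᴴ * C * Bᴴ) := by
      simp only [conjTranspose_mul, conjTranspose_conjTranspose, Matrix.mul_assoc]
    have e2 : ((C * Bᴴ)ᴴ * (C * Bᴴ)).trace = (Cᴴ * C * (Bᴴ * B)).trace := by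
      rw [e, Matrix.trace_mul_comm, Matrix.mul_assoc]
    have h2 : C * Bᴴ = 0 := traceCT_eq_zero (by rw [e2, h])
    have h3 : B * Cᴴ = 0 := by
      have := congrArg conjTranspose h2
      simpa only [conjTranspose_mul, conjTranspose_conjTranspose, conjTranspose_zero] using this
    calc Bᴴ * B * (Cᴴ * C) = Bᴴ * (B * Cᴴ) * C := by
          simp only [Matrix.mul_assoc]
      _ = 0 := by rw [h3, Matrix.mul_zero, Matrix.zero_mul]
  · intro h
    rw [Matrix.trace_mul_comm, h, Matrix.trace_zero]

lemma sum_mulVec' {ι : Type*} (s : Finset ι) (f : ι → Matrix (Fin d) (Fin d) ℂ) (v : Fin d → ℂ) :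
    (∑ i ∈ s, f i) *ᵥ v = ∑ i ∈ s, f i *ᵥ v := by
  classical
  induction s using Finset.induction with
  | empty => simp
  | insert _ _ h ih => rw [Finset.sum_insert h, Finset.sum_insert h, Matrix.add_mulVec, ih]

lemma psd_sum {ι : Type*} (s : Finset ι) (f : ι → Matrix (Fin d) (Fin d) ℂ)
    (hf : ∀ i ∈ s, (f i).PosSemidef) : (∑ i ∈ s, f i).PosSemidef := by
  classical
  induction s using Finset.induction with
  | empty => simpa using Matrix.PosSemidef.zero
  | insert _ _ h ih =>
      rw [Finset.sum_insert h]
      exact ((hf _ (Finset.mem_insert_self _ _)).add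
        (ih fun i hi => hf i (Finset.mem_insert_of_mem hi)))

lemma psd_sum_mulVec_zero {ι : Type*} {s : Finset ι} {f : ι → Matrix (Fin d) (Fin d) ℂ}
    (hf : ∀ i ∈ s, (f i).PosSemidef) {v : Fin d → ℂ}
    (h : (∑ i ∈ s, f i) *ᵥ v = 0) : ∀ i ∈ s, f i *ᵥ v = 0 := by
  intro i hi
  have hdot : ∑ j ∈ s, star v ⬝ᵥ (f j *ᵥ v) = 0 := by
    have h2 : star v ⬝ᵥ ((∑ i ∈ s, f i) *ᵥ v) = 0 := by rw [h, dotProduct_zero]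
    rw [sum_mulVec'] at h2
    rw [← h2]
    simp only [dotProduct, Finset.sum_apply, Finset.mul_sum]
    exact Finset.sum_comm
  have hz := (Finset.sum_eq_zero_iff_of_nonneg fun j hj => (hf j hj).dotProduct_mulVec_nonneg v).mp hdot i hi
  exact ((hf i hi).dotProduct_mulVec_zero_iff v).mp hz

lemma mul_eq_zero_iff_forall_mulVec {M N : Matrix (Fin d) (Fin d) ℂ} :
    M * N = 0 ↔ ∀ x, M *ᵥ (N *ᵥ x) = 0 := by
  constructor
  · intro h x
    rw [Matrix.mulVec_mulVec, h, Matrix.zero_mulVec]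
  · intro h
    ext i j
    have := congrFun (h (Pi.single j 1)) i
    rw [Matrix.mulVec_mulVec] at this
    simpa [Matrix.mulVec_single_one] using this

end Pair


section Prog

variable {d m n : ℕ} (E : Fin m → Fin n → Matrix (Fin d) (Fin d) ℂ)
    (M₁ : Matrix (Fin d) (Fin d) ℂ)

lemma psd_sum0 {ι : Type*} (s : Finset ι) (f : ι → Matrix (Fin d) (Fin d) ℂ)
    (hf : ∀ i ∈ s, (f i).PosSemidef) : (∑ i ∈ s, f i).PosSemidef := by
  classical
  induction s using Finset.induction with
  | empty => simpa using Matrix.PosSemidef.zero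
  | insert _ _ h ih =>
      rw [Finset.sum_insert h]
      exact ((hf _ (Finset.mem_insert_self _ _)).add
        (ih fun i hi => hf i (Finset.mem_insert_of_mem hi)))

lemma progF_psd {ρ : Matrix (Fin d) (Fin d) ℂ} (hρ : ρ.PosSemidef) (k : Fin m) :
    (progF E M₁ k ρ).PosSemidef := by
  refine psd_sum0 _ _ fun i _ => ?_
  exact (hρ.mul_mul_conjTranspose_same M₁).mul_mul_conjTranspose_same (E k i)

lemma progF_add (k : Fin m) (ρ σ : Matrix (Fin d) (Fin d) ℂ) :
    progF E M₁ k (ρ + σ) = progF E M₁ k ρ + progF E M₁ k σ := by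
  simp only [progF, Matrix.mul_add, Matrix.add_mul, Finset.sum_add_distrib]

lemma progF_zero (k : Fin m) : progF E M₁ k 0 = 0 := by
  simp [progF]

lemma progF_sum {ι : Type*} (k : Fin m) (s : Finset ι) (f : ι → Matrix (Fin d) (Fin d) ℂ) :
    progF E M₁ k (∑ i ∈ s, f i) = ∑ i ∈ s, progF E M₁ k (f i) := by
  classical
  induction s using Finset.induction with
  | empty => simpa using progF_zero E M₁ k
  | insert _ _ h ih => rw [Finset.sum_insert h, Finset.sum_insert h, progF_add, ih]

lemma progFStr_append (a b : List (Fin m)) (ρ : Matrix (Fin d) (Fin d) ℂ) :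
    progFStr E M₁ (a ++ b) ρ = progFStr E M₁ b (progFStr E M₁ a ρ) := by
  induction a generalizing ρ with
  | nil => rfl
  | cons k a ih =>
      show progFStr E M₁ (a ++ b) (progF E M₁ k ρ) = _
      rw [ih]
      rfl

lemma progFStr_psd {ρ : Matrix (Fin d) (Fin d) ℂ} (hρ : ρ.PosSemidef) (w : List (Fin m)) :
    (progFStr E M₁ w ρ).PosSemidef := by
  induction w generalizing ρ with
  | nil => exact hρ
  | cons k w ih => exact ih (progF_psd E M₁ hρ k)

lemma progFStr_zero (w : List (Fin m)) : progFStr E M₁ w 0 = 0 := by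
  induction w with
  | nil => rfl
  | cons k w ih => simp only [progFStr, progF_zero, ih]

noncomputable def Adual : List (Fin m) → Matrix (Fin d) (Fin d) ℂ
  | [] => 1
  | k :: r => M₁ᴴ * (∑ i, (E k i)ᴴ * Adual r * E k i) * M₁

lemma Adual_psd (r : List (Fin m)) : (Adual E M₁ r).PosSemidef := by
  induction r with
  | nil => exact Matrix.PosSemidef.one
  | cons k r ih =>
      have hs : (∑ i, (E k i)ᴴ * Adual E M₁ r * E k i).PosSemidef :=
        psd_sum0 _ _ fun i _ => ih.conjTranspose_mul_mul_same (E k i)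
      exact hs.conjTranspose_mul_mul_same M₁

lemma trace_Adual_cons (k : Fin m) (r : List (Fin m)) (ρ : Matrix (Fin d) (Fin d) ℂ) :
    (Adual E M₁ (k :: r) * ρ).trace = (Adual E M₁ r * progF E M₁ k ρ).trace := by
  simp only [Adual, progF, Matrix.mul_sum, Matrix.sum_mul, Matrix.trace_sum]
  refine Finset.sum_congr rfl fun i _ => ?_
  simp only [Matrix.mul_assoc]
  rw [Matrix.trace_mul_comm]
  simp only [Matrix.mul_assoc]
  rw [Matrix.trace_mul_comm]
  simp only [Matrix.mul_assoc]

end Prog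

section ZChar

variable {d m n : ℕ} (E : Fin m → Fin n → Matrix (Fin d) (Fin d) ℂ)
    (M₁ : Matrix (Fin d) (Fin d) ℂ)

lemma psd_eq_zero_of_trace {ρ : Matrix (Fin d) (Fin d) ℂ} (hρ : ρ.PosSemidef)
    (h : ρ.trace = 0) : ρ = 0 := by
  obtain ⟨B, rfl⟩ := psd_exists_conjTranspose_mul_self hρ
  rw [traceCT_eq_zero h]
  simp

lemma progFStr_eq_zero_iff {ρ : Matrix (Fin d) (Fin d) ℂ} (hρ : ρ.PosSemidef)
    (r : List (Fin m)) :
    progFStr E M₁ r ρ = 0 ↔ (Adual E M₁ r * ρ).trace = 0 := by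
  induction r generalizing ρ with
  | nil =>
      show ρ = 0 ↔ _
      constructor
      · intro h; rw [h, Matrix.mul_zero, Matrix.trace_zero]
      · intro h
        refine psd_eq_zero_of_trace hρ ?_
        rw [show Adual E M₁ ([] : List (Fin m)) = 1 from rfl, Matrix.one_mul] at h
        exact h
  | cons k r ih =>
      show progFStr E M₁ r (progF E M₁ k ρ) = 0 ↔ _
      rw [ih (progF_psd E M₁ hρ k), trace_Adual_cons]

lemma progFStr_ker_mono {ρ σ : Matrix (Fin d) (Fin d) ℂ} (hρ : ρ.PosSemidef)
    (hσ : σ.PosSemidef) (hker : ∀ v, ρ *ᵥ v = 0 → σ *ᵥ v = 0) (r : List (Fin m))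
    (h : progFStr E M₁ r ρ = 0) : progFStr E M₁ r σ = 0 := by
  rw [progFStr_eq_zero_iff E M₁ hρ] at h
  rw [progFStr_eq_zero_iff E M₁ hσ]
  have hA := Adual_psd E M₁ r
  rw [psd_trace_mul_eq_zero_iff hA hρ, mul_eq_zero_iff_forall_mulVec] at h
  rw [psd_trace_mul_eq_zero_iff hA hσ, mul_eq_zero_iff_forall_mulVec]
  intro x
  exact hker _ (h x)

lemma progFStr_sum_eq_zero_iff {ι : Type*} {s : Finset ι} {f : ι → Matrix (Fin d) (Fin d) ℂ}
    (hf : ∀ i ∈ s, (f i).PosSemidef) (r : List (Fin m)) :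
    progFStr E M₁ r (∑ i ∈ s, f i) = 0 ↔ ∀ i ∈ s, progFStr E M₁ r (f i) = 0 := by
  classical
  induction s using Finset.induction with
  | empty => simp [progFStr_zero]
  | @insert a s' h ih =>
      rw [Finset.sum_insert h]
      have hfa : (f a).PosSemidef := hf _ (Finset.mem_insert_self _ _)
      have hfs : (∑ i ∈ s', f i).PosSemidef := psd_sum _ _ fun i hi => hf i (Finset.mem_insert_of_mem hi)
      rw [progFStr_eq_zero_iff E M₁ (hfa.add hfs), Matrix.mul_add, Matrix.trace_add]
      have hA := Adual_psd E M₁ r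
      have h1 := psd_trace_mul_nonneg hA hfa
      have h2 := psd_trace_mul_nonneg hA hfs
      rw [add_eq_zero_iff_of_nonneg h1 h2, ← progFStr_eq_zero_iff E M₁ hfa,
        ← progFStr_eq_zero_iff E M₁ hfs,
        ih fun i hi => hf i (Finset.mem_insert_of_mem hi)]
      simp [Finset.forall_mem_insert]

end ZChar

section Chain

variable {d m n : ℕ} (E : Fin m → Fin n → Matrix (Fin d) (Fin d) ℂ)
    (M₁ : Matrix (Fin d) (Fin d) ℂ)

lemma psd_add_mulVec_zero {a b : Matrix (Fin d) (Fin d) ℂ} (ha : a.PosSemidef)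
    (hb : b.PosSemidef) {v : Fin d → ℂ} (h : (a + b) *ᵥ v = 0) :
    a *ᵥ v = 0 ∧ b *ᵥ v = 0 := by
  have hdot : star v ⬝ᵥ (a *ᵥ v) + star v ⬝ᵥ (b *ᵥ v) = 0 := by
    rw [← dotProduct_add, ← Matrix.add_mulVec, h, dotProduct_zero]
  have h2 := (add_eq_zero_iff_of_nonneg (ha.dotProduct_mulVec_nonneg v) (hb.dotProduct_mulVec_nonneg v)).mp hdot
  exact ⟨(ha.dotProduct_mulVec_zero_iff v).mp h2.1, (hb.dotProduct_mulVec_zero_iff v).mp h2.2⟩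

lemma progF_eq (k : Fin m) (ρ : Matrix (Fin d) (Fin d) ℂ) :
    progF E M₁ k ρ = ∑ i, (E k i * M₁) * ρ * (E k i * M₁)ᴴ := by
  simp only [progF, conjTranspose_mul, Matrix.mul_assoc]

lemma progF_ker_mono {a b : Matrix (Fin d) (Fin d) ℂ} (ha : a.PosSemidef)
    (hab : ∀ v, a *ᵥ v = 0 → b *ᵥ v = 0) (k : Fin m) {v : Fin d → ℂ}
    (hv : progF E M₁ k a *ᵥ v = 0) : progF E M₁ k b *ᵥ v = 0 := by
  rw [progF_eq] at hv ⊢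
  have hterm : ∀ i, ((E k i * M₁) * a * (E k i * M₁)ᴴ) *ᵥ v = 0 := fun i =>
    psd_sum_mulVec_zero (fun i _ => ha.mul_mul_conjTranspose_same _) hv i (Finset.mem_univ i)
  rw [sum_mulVec']
  refine Finset.sum_eq_zero fun i _ => ?_
  set C := E k i * M₁ with hC
  have e : ∀ x : Matrix (Fin d) (Fin d) ℂ, (C * x * Cᴴ) *ᵥ v = C *ᵥ (x *ᵥ (Cᴴ *ᵥ v)) := by
    intro x
    rw [← Matrix.mulVec_mulVec, ← Matrix.mulVec_mulVec]
  have hstar : star (Cᴴ *ᵥ v) = star v ᵥ* C := by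
    rw [star_mulVec, conjTranspose_conjTranspose]
  have h2 : star (Cᴴ *ᵥ v) ⬝ᵥ (a *ᵥ (Cᴴ *ᵥ v)) = 0 := by
    rw [hstar, ← dotProduct_mulVec, ← e, hterm i, dotProduct_zero]
  have h3 : a *ᵥ (Cᴴ *ᵥ v) = 0 := (ha.dotProduct_mulVec_zero_iff _).mp h2
  rw [e, hab _ h3, Matrix.mulVec_zero]

noncomputable def Sig : ℕ → Matrix (Fin d) (Fin d) ℂ → Matrix (Fin d) (Fin d) ℂ
  | 0, ρ => ρ
  | j+1, ρ => ∑ k, progF E M₁ k (Sig j ρ)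

lemma Sig_psd (j : ℕ) {ρ : Matrix (Fin d) (Fin d) ℂ} (hρ : ρ.PosSemidef) :
    (Sig E M₁ j ρ).PosSemidef := by
  induction j with
  | zero => exact hρ
  | succ j ih => exact psd_sum0 _ _ fun k _ => progF_psd E M₁ ih k

lemma Sig_add (j : ℕ) (ρ σ : Matrix (Fin d) (Fin d) ℂ) :
    Sig E M₁ j (ρ + σ) = Sig E M₁ j ρ + Sig E M₁ j σ := by
  induction j with
  | zero => rfl
  | succ j ih =>
      show ∑ k, progF E M₁ k (Sig E M₁ j (ρ + σ)) = _
      rw [ih]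
      simp only [progF_add, Finset.sum_add_distrib]
      rfl

lemma Sig_zero (j : ℕ) : Sig E M₁ j (0 : Matrix (Fin d) (Fin d) ℂ) = 0 := by
  induction j with
  | zero => rfl
  | succ j ih =>
      show ∑ k, progF E M₁ k (Sig E M₁ j 0) = 0
      rw [ih]
      simp [progF_zero]

lemma Sig_succ_left (j : ℕ) (ρ : Matrix (Fin d) (Fin d) ℂ) :
    Sig E M₁ (j+1) ρ = ∑ k, Sig E M₁ j (progF E M₁ k ρ) := by
  induction j generalizing ρ with
  | zero => rfl
  | succ j ih =>
      show ∑ k, progF E M₁ k (Sig E M₁ (j+1) ρ) = _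
      calc ∑ k, progF E M₁ k (Sig E M₁ (j+1) ρ)
          = ∑ k, progF E M₁ k (∑ k', Sig E M₁ j (progF E M₁ k' ρ)) := by rw [ih]
        _ = ∑ k, ∑ k', progF E M₁ k (Sig E M₁ j (progF E M₁ k' ρ)) :=
              Finset.sum_congr rfl fun k _ => progF_sum E M₁ k _ _
        _ = ∑ k', ∑ k, progF E M₁ k (Sig E M₁ j (progF E M₁ k' ρ)) := Finset.sum_comm
        _ = ∑ k', Sig E M₁ (j+1) (progF E M₁ k' ρ) := rfl

lemma Sig_dominates (w : List (Fin m)) :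
    ∀ ρ : Matrix (Fin d) (Fin d) ℂ, ρ.PosSemidef →
    ∃ τ, τ.PosSemidef ∧ Sig E M₁ w.length ρ = progFStr E M₁ w ρ + τ := by
  induction w with
  | nil => exact fun ρ _ => ⟨0, Matrix.PosSemidef.zero, by simp [Sig, progFStr]⟩
  | cons k w ih =>
      intro ρ hρ
      obtain ⟨τ', hτ', hw⟩ := ih (progF E M₁ k ρ) (progF_psd E M₁ hρ k)
      refine ⟨τ' + ∑ k' ∈ Finset.univ.erase k, Sig E M₁ w.length (progF E M₁ k' ρ),
        hτ'.add (psd_sum0 _ _ fun k' _ => Sig_psd E M₁ _ (progF_psd E M₁ hρ k')), ?_⟩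
      have e1 : Sig E M₁ (k :: w).length ρ = ∑ k', Sig E M₁ w.length (progF E M₁ k' ρ) :=
        Sig_succ_left E M₁ w.length ρ
      rw [e1, ← Finset.add_sum_erase _ _ (Finset.mem_univ k), hw]
      show progFStr E M₁ w (progF E M₁ k ρ) + τ' + _ = progFStr E M₁ w (progF E M₁ k ρ) + (τ' + _)
      rw [add_assoc]

noncomputable def Rho (j : ℕ) (ρ : Matrix (Fin d) (Fin d) ℂ) : Matrix (Fin d) (Fin d) ℂ :=
  ∑ i ∈ Finset.range (j+1), Sig E M₁ i ρ

lemma Rho_psd (j : ℕ) {ρ : Matrix (Fin d) (Fin d) ℂ} (hρ : ρ.PosSemidef) :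
    (Rho E M₁ j ρ).PosSemidef :=
  psd_sum0 _ _ fun i _ => Sig_psd E M₁ i hρ

lemma Rho_succ (j : ℕ) (ρ : Matrix (Fin d) (Fin d) ℂ) :
    Rho E M₁ (j+1) ρ = Rho E M₁ j ρ + Sig E M₁ (j+1) ρ :=
  Finset.sum_range_succ _ _

lemma Rho_zero (ρ : Matrix (Fin d) (Fin d) ℂ) : Rho E M₁ 0 ρ = ρ := by
  simp [Rho]
  rfl

lemma Rho_mulVec_zero_iff (j : ℕ) {ρ : Matrix (Fin d) (Fin d) ℂ} (hρ : ρ.PosSemidef)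
    (v : Fin d → ℂ) :
    Rho E M₁ j ρ *ᵥ v = 0 ↔ ∀ i ∈ Finset.range (j+1), Sig E M₁ i ρ *ᵥ v = 0 := by
  constructor
  · intro h
    exact psd_sum_mulVec_zero (fun i _ => Sig_psd E M₁ i hρ) h
  · intro h
    rw [Rho, sum_mulVec']
    exact Finset.sum_eq_zero h

end Chain

section Chain2

variable {d m n : ℕ} (E : Fin m → Fin n → Matrix (Fin d) (Fin d) ℂ)
    (M₁ : Matrix (Fin d) (Fin d) ℂ)

lemma prop_step {ρ : Matrix (Fin d) (Fin d) ℂ} (hρ : ρ.PosSemidef) (j : ℕ)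
    (hP : ∀ v, Rho E M₁ j ρ *ᵥ v = 0 → Sig E M₁ (j+1) ρ *ᵥ v = 0) :
    ∀ v, Rho E M₁ (j+1) ρ *ᵥ v = 0 → Sig E M₁ (j+2) ρ *ᵥ v = 0 := by
  intro v hv
  have hsig : ∀ i ∈ Finset.range (j+2), Sig E M₁ i ρ *ᵥ v = 0 :=
    (Rho_mulVec_zero_iff E M₁ (j+1) hρ v).mp hv
  have hFk : ∀ (k : Fin m), ∀ i ∈ Finset.range (j+1), progF E M₁ k (Sig E M₁ i ρ) *ᵥ v = 0 := by
    intro k i hi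
    have h1 : Sig E M₁ (i+1) ρ *ᵥ v = 0 := by
      refine hsig (i+1) ?_
      rw [Finset.mem_range] at hi ⊢
      omega
    have h2 : (∑ k', progF E M₁ k' (Sig E M₁ i ρ)) *ᵥ v = 0 := h1
    exact psd_sum_mulVec_zero (fun k' _ => progF_psd E M₁ (Sig_psd E M₁ i hρ) k') h2 k
      (Finset.mem_univ k)
  have hRho_k : ∀ k : Fin m, progF E M₁ k (Rho E M₁ j ρ) *ᵥ v = 0 := by
    intro k
    rw [Rho, progF_sum, sum_mulVec']
    exact Finset.sum_eq_zero fun i hi => hFk k i hi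
  have hSig_k : ∀ k : Fin m, progF E M₁ k (Sig E M₁ (j+1) ρ) *ᵥ v = 0 :=
    fun k => progF_ker_mono E M₁ (Rho_psd E M₁ j hρ) hP k (hRho_k k)
  show (∑ k, progF E M₁ k (Sig E M₁ (j+1) ρ)) *ᵥ v = 0
  rw [sum_mulVec']
  exact Finset.sum_eq_zero fun k _ => hSig_k k

lemma matrix_eq_zero_of_mulVec {ρ : Matrix (Fin d) (Fin d) ℂ}
    (h : ∀ v, ρ *ᵥ v = 0) : ρ = 0 := by
  ext i j
  have := congrFun (h (Pi.single j 1)) i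
  simpa [Matrix.mulVec_single_one] using this

lemma exists_stable {ρ : Matrix (Fin d) (Fin d) ℂ} (hρ : ρ.PosSemidef) (hρ0 : ρ ≠ 0) :
    ∃ j ≤ d - 1, ∀ v, Rho E M₁ j ρ *ᵥ v = 0 → Sig E M₁ (j+1) ρ *ᵥ v = 0 := by
  by_contra hcon
  push_neg at hcon
  -- hcon : ∀ j ≤ d - 1, ∃ v, Rho j ρ *ᵥ v = 0 ∧ Sig (j+1) ρ *ᵥ v ≠ 0
  set K : ℕ → Submodule ℂ (Fin d → ℂ) := fun j => LinearMap.ker (Rho E M₁ j ρ).mulVecLin with hK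
  have hmem : ∀ j v, v ∈ K j ↔ Rho E M₁ j ρ *ᵥ v = 0 := by
    intro j v
    simp [hK, LinearMap.mem_ker, Matrix.mulVecLin_apply]
  have hmono : ∀ j, K (j+1) ≤ K j := by
    intro j v hv
    rw [hmem] at hv ⊢
    rw [Rho_succ] at hv
    exact (psd_add_mulVec_zero (Rho_psd E M₁ j hρ) (Sig_psd E M₁ (j+1) hρ) hv).1
  have hstrict : ∀ j ≤ d - 1, K (j+1) < K j := by
    intro j hj
    obtain ⟨v, hv1, hv2⟩ := hcon j hj
    refine lt_of_le_of_ne (hmono j) fun he => hv2 ?_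
    have hvK : v ∈ K j := (hmem j v).mpr hv1
    rw [← he, hmem] at hvK
    rw [Rho_succ] at hvK
    exact (psd_add_mulVec_zero (Rho_psd E M₁ j hρ) (Sig_psd E M₁ (j+1) hρ) hvK).2
  have hfr : ∀ j ≤ d - 1, Module.finrank ℂ (K j) + j ≤ Module.finrank ℂ (K 0) := by
    intro j hj
    induction j with
    | zero => omega
    | succ j ih =>
        have h1 : Module.finrank ℂ (K (j+1)) < Module.finrank ℂ (K j) :=
          Submodule.finrank_lt_finrank_of_lt (hstrict j (by omega))
        have h2 := ih (by omega)
        omega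
  have hK0 : Module.finrank ℂ (K 0) ≤ d - 1 := by
    have hne : K 0 ≠ ⊤ := by
      intro htop
      apply hρ0
      refine matrix_eq_zero_of_mulVec fun v => ?_
      have : v ∈ K 0 := htop ▸ Submodule.mem_top
      rw [hmem, Rho_zero] at this
      exact this
    have hlt : Module.finrank ℂ (K 0) < Module.finrank ℂ (Fin d → ℂ) :=
      Submodule.finrank_lt hne
    rw [Module.finrank_fintype_fun_eq_card, Fintype.card_fin] at hlt
    omega
  have hbot : K (d - 1) = ⊥ := by
    have := hfr (d-1) le_rfl
    have hz : Module.finrank ℂ (K (d-1)) = 0 := by omega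
    exact Submodule.finrank_eq_zero.mp hz
  obtain ⟨v, hv1, hv2⟩ := hcon (d-1) le_rfl
  have hvK : v ∈ K (d-1) := (hmem _ v).mpr hv1
  rw [hbot, Submodule.mem_bot] at hvK
  subst hvK
  exact hv2 (Matrix.mulVec_zero _)

lemma Sig_ker_final {ρ : Matrix (Fin d) (Fin d) ℂ} (hρ : ρ.PosSemidef) (a : ℕ)
    {v : Fin d → ℂ} (hv : Rho E M₁ (d-1) ρ *ᵥ v = 0) : Sig E M₁ a ρ *ᵥ v = 0 := by
  by_cases hρ0 : ρ = 0
  · subst hρ0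
    rw [Sig_zero, Matrix.zero_mulVec]
  obtain ⟨j0, hj0, hP0⟩ := exists_stable E M₁ hρ hρ0
  have hPall : ∀ j, j0 ≤ j → ∀ w, Rho E M₁ j ρ *ᵥ w = 0 → Sig E M₁ (j+1) ρ *ᵥ w = 0 := by
    intro j hj
    induction j, hj using Nat.le_induction with
    | base => exact hP0
    | succ j hj ih => exact prop_step E M₁ hρ j ih
  have hRall : ∀ j, d - 1 ≤ j → Rho E M₁ j ρ *ᵥ v = 0 := by
    intro j hj
    induction j, hj using Nat.le_induction with
    | base => exact hv
    | succ j hj ih =>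
        rw [Rho_succ, Matrix.add_mulVec, ih, hPall j (le_trans hj0 hj) v ih, add_zero]
  have hR : Rho E M₁ (max a (d-1)) ρ *ᵥ v = 0 := hRall _ (le_max_right _ _)
  refine (Rho_mulVec_zero_iff E M₁ _ hρ v).mp hR a ?_
  rw [Finset.mem_range]
  omega

lemma progFStr_Sig_eq_zero_iff (r : List (Fin m)) (i : ℕ) :
    ∀ {ρ : Matrix (Fin d) (Fin d) ℂ}, ρ.PosSemidef →
    (progFStr E M₁ r (Sig E M₁ i ρ) = 0 ↔
      ∀ w : List (Fin m), w.length = i → progFStr E M₁ r (progFStr E M₁ w ρ) = 0) := by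
  induction i with
  | zero =>
      intro ρ hρ
      constructor
      · intro h w hw
        rw [List.length_eq_zero_iff] at hw
        subst hw
        exact h
      · intro h
        exact h [] rfl
  | succ i ih =>
      intro ρ hρ
      rw [Sig_succ_left,
        progFStr_sum_eq_zero_iff E M₁ (fun k _ => Sig_psd E M₁ i (progF_psd E M₁ hρ k)) r]
      constructor
      · intro h w hw
        cases w with
        | nil => simp at hw
        | cons k w' =>
            have hw' : w'.length = i := by simpa using hw
            exact (ih (progF_psd E M₁ hρ k)).mp (h k (Finset.mem_univ k)) w' hw'
      · intro h k _
        rw [ih (progF_psd E M₁ hρ k)]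
        intro w hw
        exact h (k :: w) (by simp [hw])

lemma compression {ρ : Matrix (Fin d) (Fin d) ℂ} (hρ : ρ.PosSemidef)
    (u r : List (Fin m)) (h : progFStr E M₁ (u ++ r) ρ ≠ 0) :
    ∃ w : List (Fin m), w.length ≤ d - 1 ∧ progFStr E M₁ (w ++ r) ρ ≠ 0 := by
  by_contra hcon
  push_neg at hcon
  apply h
  rw [progFStr_append]
  have hRho0 : progFStr E M₁ r (Rho E M₁ (d-1) ρ) = 0 := by
    rw [Rho, progFStr_sum_eq_zero_iff E M₁ (fun i _ => Sig_psd E M₁ i hρ) r]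
    intro i hi
    rw [progFStr_Sig_eq_zero_iff E M₁ r i hρ]
    intro w hw
    rw [← progFStr_append]
    refine hcon w ?_
    rw [Finset.mem_range] at hi
    omega
  refine progFStr_ker_mono E M₁ (Rho_psd E M₁ (d-1) hρ) (progFStr_psd E M₁ hρ u) ?_ r hRho0
  intro v hv
  have h1 := Sig_ker_final E M₁ hρ u.length hv
  obtain ⟨τ, hτ, hdec⟩ := Sig_dominates E M₁ u ρ hρ
  exact (psd_add_mulVec_zero (progFStr_psd E M₁ hρ u) hτ (by rw [← hdec]; exact h1)).1

end Chain2

section Unif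

variable {d m n : ℕ} (E : Fin m → Fin n → Matrix (Fin d) (Fin d) ℂ)
    (M₁ : Matrix (Fin d) (Fin d) ℂ)

lemma progFStr_zero_of_prefix {ρ : Matrix (Fin d) (Fin d) ℂ} {l l' : List (Fin m)}
    (hpre : l <+: l') (h : progFStr E M₁ l ρ = 0) : progFStr E M₁ l' ρ = 0 := by
  obtain ⟨t, rfl⟩ := hpre
  rw [progFStr_append, h, progFStr_zero]

lemma compression_unif {ρ : Matrix (Fin d) (Fin d) ℂ} (hρ : ρ.PosSemidef)
    (u : List (Fin m)) (r : ℕ → List (Fin m))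
    (hr : ∀ N, r N <+: r (N+1))
    (h : ∀ N, progFStr E M₁ (u ++ r N) ρ ≠ 0) :
    ∃ w : List (Fin m), w.length ≤ d - 1 ∧ ∀ N, progFStr E M₁ (w ++ r N) ρ ≠ 0 := by
  have hpref : ∀ N N', N ≤ N' → r N <+: r N' := by
    intro N N' hNN
    induction N', hNN using Nat.le_induction with
    | base => exact List.prefix_rfl
    | succ N' hNN ih => exact ih.trans (hr N')
  by_contra hcon
  push_neg at hcon
  -- hcon : ∀ w, w.length ≤ d - 1 → ∃ N, progFStr E M₁ (w ++ r N) ρ = 0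
  haveI : Finite {w : List (Fin m) // w.length ≤ d - 1} :=
    (List.finite_length_le (Fin m) (d-1)).to_subtype
  set g : {w : List (Fin m) // w.length ≤ d - 1} → ℕ :=
    fun w => Classical.choose (hcon w.1 w.2) with hg
  have hgspec : ∀ w : {w : List (Fin m) // w.length ≤ d - 1},
      progFStr E M₁ (w.1 ++ r (g w)) ρ = 0 :=
    fun w => Classical.choose_spec (hcon w.1 w.2)
  obtain ⟨Nmax, hNmax⟩ := Finite.exists_le g
  obtain ⟨w, hw, hwne⟩ := compression E M₁ hρ u (r Nmax) (h Nmax)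
  apply hwne
  have hle : g ⟨w, hw⟩ ≤ Nmax := hNmax _
  have hz := hgspec ⟨w, hw⟩
  refine progFStr_zero_of_prefix E M₁ ?_ hz
  obtain ⟨t, ht⟩ := hpref _ _ hle
  exact ⟨t, by rw [← ht, List.append_assoc]⟩

end Unif

section Segs

variable {m : ℕ}

def seg (s : ℕ → Fin m) (c N : ℕ) : List (Fin m) :=
  List.ofFn fun i : Fin N => s (c + i)

lemma ofFn_add' {α : Type*} (f : ℕ → α) (a b : ℕ) :
    (List.ofFn fun i : Fin (a+b) => f i) =
      (List.ofFn fun i : Fin a => f i) ++ (List.ofFn fun i : Fin b => f (a + i)) := by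
  rw [List.ofFn_add]
  congr 1

lemma seg_append (s : ℕ → Fin m) (c a b : ℕ) :
    seg s c (a + b) = seg s c a ++ seg s (c + a) b := by
  unfold seg
  rw [ofFn_add' (fun i : ℕ => s (c + i)) a b]
  simp only [Nat.add_assoc]

lemma seg_zero_len (s : ℕ → Fin m) (c : ℕ) : seg s c 0 = [] := rfl

lemma seg_one (s : ℕ → Fin m) (c : ℕ) : seg s c 1 = [s c] := by
  simp [seg, List.ofFn_succ]

lemma seg_succ_head (s : ℕ → Fin m) (c N : ℕ) :
    seg s c (N+1) = s c :: seg s (c+1) N := by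
  rw [show N + 1 = 1 + N by omega, seg_append, seg_one]
  rfl

lemma seg_length (s : ℕ → Fin m) (c N : ℕ) : (seg s c N).length = N := by
  simp [seg]

lemma prefixOf_eq_seg (s : ℕ → Fin m) (N : ℕ) : prefixOf s N = seg s 0 N := by
  unfold prefixOf seg
  congr 1
  funext i
  rw [Nat.zero_add]

lemma prefixOf_prefix (s : ℕ → Fin m) {N M : ℕ} (h : N ≤ M) :
    prefixOf s N <+: prefixOf s M := by
  obtain ⟨e, rfl⟩ : ∃ e, M = N + e := ⟨M - N, by omega⟩
  rw [prefixOf_eq_seg, prefixOf_eq_seg, seg_append]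
  exact ⟨_, rfl⟩

end Segs

section NTP

variable {d m n : ℕ} (E : Fin m → Fin n → Matrix (Fin d) (Fin d) ℂ)
    (M₁ : Matrix (Fin d) (Fin d) ℂ) (ρ₀ : Matrix (Fin d) (Fin d) ℂ) (s : ℕ → Fin m)

def NTp (b : List (Fin m)) (c : ℕ) : Prop :=
  ∀ N, progFStr E M₁ (b ++ seg s c N) ρ₀ ≠ 0

lemma NTp_first {b : List (Fin m)} {c : ℕ} (h : NTp E M₁ ρ₀ s b c) :
    NTp E M₁ ρ₀ s (b ++ [s c]) (c + 1) := by
  intro N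
  have h2 := h (N + 1)
  rw [seg_succ_head] at h2
  rw [List.append_assoc]
  exact h2

lemma NTp_block (hρ₀ : ρ₀.PosSemidef) (hfair : Fair s) {b : List (Fin m)} {c : ℕ}
    (h : NTp E M₁ ρ₀ s b c) (k : Fin m) :
    ∃ (w : List (Fin m)) (c' : ℕ), w.length ≤ d - 1 ∧ c ≤ c' ∧ s c' = k ∧
      NTp E M₁ ρ₀ s (b ++ (w ++ [k])) (c' + 1) := by
  obtain ⟨c', hc', hsk⟩ := hfair k c
  set τ := progFStr E M₁ b ρ₀ with hτ
  have hτpsd : τ.PosSemidef := progFStr_psd E M₁ hρ₀ b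
  set r : ℕ → List (Fin m) := fun N => k :: seg s (c'+1) N with hrdef
  have hr : ∀ N, r N <+: r (N+1) := by
    intro N
    refine List.cons_prefix_cons.mpr ⟨rfl, ?_⟩
    rw [seg_append s (c'+1) N 1]
    exact ⟨_, rfl⟩
  have hcomp : ∀ N, progFStr E M₁ (seg s c (c' - c) ++ r N) τ ≠ 0 := by
    intro N
    have e : b ++ (seg s c (c' - c) ++ r N) = b ++ seg s c ((c' - c) + (1 + N)) := by
      rw [seg_append s c (c' - c) (1 + N), seg_append s _ 1 N]
      have e2 : c + (c' - c) = c' := by omega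
      rw [e2, seg_one, hsk]
      simp [hrdef, List.append_assoc]
    have h2 := h ((c' - c) + (1 + N))
    rw [← e] at h2
    rw [progFStr_append] at h2
    exact h2
  obtain ⟨w, hwlen, hwne⟩ := compression_unif E M₁ hτpsd (seg s c (c' - c)) r hr hcomp
  refine ⟨w, c', hwlen, hc', hsk, ?_⟩
  intro N
  have h3 := hwne N
  rw [← progFStr_append] at h3
  intro hzero
  apply h3
  have e3 : b ++ (w ++ (k :: seg s (c'+1) N)) = (b ++ (w ++ [k])) ++ seg s (c'+1) N := by
    simp [List.append_assoc]
  show progFStr E M₁ (b ++ (w ++ (k :: seg s (c'+1) N))) ρ₀ = 0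
  rw [e3]
  exact hzero

end NTP

section Blocks

variable {d m n : ℕ} (E : Fin m → Fin n → Matrix (Fin d) (Fin d) ℂ)
    (M₁ : Matrix (Fin d) (Fin d) ℂ) (ρ₀ : Matrix (Fin d) (Fin d) ℂ) (s : ℕ → Fin m)

lemma NTp_blocks (hρ₀ : ρ₀.PosSemidef) (hfair : Fair s) (j : ℕ) (q : Fin j → Fin m) :
    ∀ (b : List (Fin m)) (c : ℕ), NTp E M₁ ρ₀ s b c →
    ∃ (w : Fin j → List (Fin m)) (c' : ℕ), c ≤ c' ∧ (∀ i, (w i).length ≤ d - 1) ∧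
      NTp E M₁ ρ₀ s (b ++ (List.ofFn fun i : Fin j => w i ++ [q i]).flatten) c' := by
  induction j with
  | zero =>
      intro b c h
      exact ⟨fun i => [], c, le_rfl, fun i => i.elim0, by simpa using h⟩
  | succ j ih =>
      intro b c h
      obtain ⟨w, c1, hc1, hwlen, hNT1⟩ := ih (fun i => q i.castSucc) b c h
      obtain ⟨wl, c2, hwllen, hc2, hsc2, hNT2⟩ := NTp_block E M₁ ρ₀ s hρ₀ hfair hNT1 (q (Fin.last j))
      refine ⟨(Fin.snoc (α := fun _ => List (Fin m)) w wl), c2 + 1, by omega, ?_, ?_⟩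
      · intro i
        induction i using Fin.lastCases with
        | last => simpa using hwllen
        | cast i => simpa using hwlen i
      · have e : (List.ofFn fun i : Fin (j+1) => (Fin.snoc (α := fun _ => List (Fin m)) w wl i) ++ [q i]).flatten
            = (List.ofFn fun i : Fin j => w i ++ [q i.castSucc]).flatten ++ (wl ++ [q (Fin.last j)]) := by
          rw [List.ofFn_succ']
          simp only [Fin.snoc_castSucc, Fin.snoc_last]
          rw [List.concat_eq_append, List.flatten_append]
          simp
        rw [e, ← List.append_assoc]
        exact hNT2

lemma regroup {α : Type*} : ∀ (j : ℕ) (a : Fin (j+1) → α) (t : Fin (j+1) → List α),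
    t (Fin.last j) = [] →
    (List.ofFn fun i => a i :: t i).flatten
      = a 0 :: (List.ofFn fun i : Fin j => t i.castSucc ++ [a i.succ]).flatten := by
  intro j
  induction j with
  | zero =>
      intro a t hlast
      have h0 : t 0 = [] := hlast
      simp [h0]
  | succ j ih =>
      intro a t hlast
      rw [List.ofFn_succ, List.flatten_cons]
      have ihs := ih (fun i => a i.succ) (fun i => t i.succ) (by
        show t (Fin.last j).succ = []
        rw [Fin.succ_last]
        exact hlast)
      rw [ihs]
      rw [List.ofFn_succ (f := fun i : Fin (j+1) => t i.castSucc ++ [a i.succ])]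
      simp only [Fin.castSucc_zero, Fin.succ_castSucc]
      simp [List.flatten_cons]
  
end Blocks

section Piece

variable {d m' n : ℕ} (E : Fin (m'+1) → Fin n → Matrix (Fin d) (Fin d) ℂ)
    (M₁ : Matrix (Fin d) (Fin d) ℂ) (ρ₀ : Matrix (Fin d) (Fin d) ℂ) (s : ℕ → Fin (m'+1))

lemma NTp_piece (hd : 1 ≤ d) (hρ₀ : ρ₀.PosSemidef) (hfair : Fair s) {b : List (Fin (m'+1))}
    {c : ℕ} (h : NTp E M₁ ρ₀ s b c) :
    ∃ (g : List (Fin (m'+1))) (c' : ℕ), g ∈ PiPieces (m'+1) d ∧ g ≠ [] ∧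
      NTp E M₁ ρ₀ s (b ++ g) c' := by
  set p : Equiv.Perm (Fin (m'+1)) := Equiv.swap 0 (s c) with hp
  have hp0 : p 0 = s c := Equiv.swap_apply_left 0 (s c)
  have h1 := NTp_first E M₁ ρ₀ s h
  obtain ⟨w, c', hc', hwlen, hNT⟩ :=
    NTp_blocks E M₁ ρ₀ s hρ₀ hfair m' (fun i => p i.succ) (b ++ [s c]) (c+1) h1
  set t : Fin (m'+1) → List (Fin (m'+1)) :=
    (fun i => Fin.lastCases [] w i : Fin (m'+1) → List (Fin (m'+1))) with ht
  have htlast : t (Fin.last m') = [] := by simp [ht]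
  have htcast : ∀ i : Fin m', t i.castSucc = w i := by
    intro i
    simp [ht]
  have hre := regroup m' (fun i => p i) t htlast
  set g : List (Fin (m'+1)) := (List.ofFn fun i => p i :: t i).flatten with hg
  refine ⟨g, c', ⟨p, t, ?_, ?_, rfl⟩, ?_, ?_⟩
  · intro i
    induction i using Fin.lastCases with
    | last =>
        rw [htlast]
        simpa using (show 0 < d from hd)
    | cast i =>
        rw [htcast i]
        have := hwlen i
        omega
  · intro i hi
    have hival : (i : ℕ) = m' := by simpa using hi
    have : i = Fin.last m' := Fin.ext (by simpa using hival)
    rw [this]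
    exact htlast
  · rw [hre]
    exact List.cons_ne_nil _ _
  · rw [hre]
    have e : (List.ofFn fun i : Fin m' => t i.castSucc ++ [p i.succ])
        = (List.ofFn fun i : Fin m' => w i ++ [p i.succ]) := by
      congr 1
      funext i
      rw [htcast i]
    rw [e]
    show NTp E M₁ ρ₀ s (b ++ p 0 :: (List.ofFn fun i => w i ++ [p i.succ]).flatten) c'
    rw [hp0]
    have e2 : b ++ (s c :: (List.ofFn fun i : Fin m' => w i ++ [p i.succ]).flatten)
        = (b ++ [s c]) ++ (List.ofFn fun i : Fin m' => w i ++ [p i.succ]).flatten := by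
      simp
    rw [e2]
    exact hNT

end Piece

section Assemble

lemma prefix_getElem {α : Type*} {l₁ l₂ : List α} (h : l₁ <+: l₂) {i : ℕ} (hi : i < l₁.length) :
    l₂[i]'(lt_of_lt_of_le hi h.length_le) = l₁[i] := by
  obtain ⟨t, rfl⟩ := h
  exact List.getElem_append_left hi

lemma inOmega_fair {m d : ℕ} {s : ℕ → Fin m} (h : InOmega (PiPieces m d) s) : Fair s := by
  obtain ⟨g, hmem, hpre⟩ := h
  intro k N
  obtain ⟨p, t, hlent, hlast, hgN⟩ := hmem N
  have hk : k ∈ g N := by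
    rw [hgN, List.mem_flatten]
    refine ⟨p (p.symm k) :: t (p.symm k), ?_, ?_⟩
    · exact List.mem_ofFn.mpr ⟨p.symm k, rfl⟩
    · rw [Equiv.apply_symm_apply]
      exact List.mem_cons_self
  obtain ⟨idx, hidx, hgetk⟩ := List.mem_iff_getElem.mp hk
  set L : ℕ → ℕ := fun t' => (((List.range t').map g).flatten).length with hL
  have hLsucc : ∀ t', L (t'+1) = L t' + (g t').length := by
    intro t'
    simp [hL, List.range_succ]
  have hgpos : ∀ t', 0 < (g t').length := by
    intro t'
    obtain ⟨p', t'', _, _, hg'⟩ := hmem t'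
    have hmem2 : p' ⟨0, Fin.pos k⟩ ∈ g t' := by
      rw [hg', List.mem_flatten]
      exact ⟨p' ⟨0, Fin.pos k⟩ :: t'' ⟨0, Fin.pos k⟩,
        List.mem_ofFn.mpr ⟨⟨0, Fin.pos k⟩, rfl⟩, List.mem_cons_self⟩
    exact List.length_pos_iff.mpr (List.ne_nil_of_mem hmem2)
  have hLge : ∀ t', t' ≤ L t' := by
    intro t'
    induction t' with
    | zero => omega
    | succ t' ih =>
        have := hgpos t'
        rw [hLsucc]
        omega
  refine ⟨L N + idx, by have := hLge N; omega, ?_⟩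
  have e := hpre (N+1)
  have hflat : ((List.range (N+1)).map g).flatten = ((List.range N).map g).flatten ++ g N := by
    simp [List.range_succ]
  have hlt2 : L N + idx < (((List.range (N+1)).map g).flatten).length := by
    have : (((List.range (N+1)).map g).flatten).length = L (N+1) := rfl
    rw [this, hLsucc]
    omega
  have hlt3 : L N + idx < (prefixOf s ((((List.range (N+1)).map g).flatten).length)).length := by
    rw [e]
    exact hlt2
  have h1 : (prefixOf s ((((List.range (N+1)).map g).flatten).length))[L N + idx]'hlt3
      = s (L N + idx) := by
    simp [prefixOf]
  have h2 : (((List.range (N+1)).map g).flatten)[L N + idx]'hlt2 = k := by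
    have hLN : (((List.range N).map g).flatten).length = L N := rfl
    have hle : (((List.range N).map g).flatten).length ≤ L N + idx := by rw [hLN]; omega
    rw [List.getElem_of_eq hflat hlt2, List.getElem_append_right hle]
    convert hgetk using 2
    rw [hLN]
    omega
  rw [← h1, List.getElem_of_eq e hlt3, h2]

end Assemble

section Hard

lemma hard_direction {d m' n : ℕ} (E : Fin (m'+1) → Fin n → Matrix (Fin d) (Fin d) ℂ)
    (M₁ : Matrix (Fin d) (Fin d) ℂ) (ρ₀ : Matrix (Fin d) (Fin d) ℂ) (hρ₀ : ρ₀.PosSemidef)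
    (hterm : ∀ s : ℕ → Fin (m'+1), InOmega (PiPieces (m'+1) d) s →
      ∃ N : ℕ, progFStr E M₁ (prefixOf s N) ρ₀ = 0)
    (s : ℕ → Fin (m'+1)) (hfair : Fair s) :
    ∃ N : ℕ, progFStr E M₁ (prefixOf s N) ρ₀ = 0 := by
  by_contra hNT0
  push_neg at hNT0
  have hd : 1 ≤ d := by
    by_contra hd0
    have hdz : d = 0 := by omega
    subst hdz
    apply hNT0 0
    show ρ₀ = 0
    ext i j
    exact i.elim0
  have hNT : NTp E M₁ ρ₀ s [] 0 := by
    intro N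
    rw [List.nil_append, ← prefixOf_eq_seg]
    exact hNT0 N
  let T := {x : List (Fin (m'+1)) × ℕ // NTp E M₁ ρ₀ s x.1 x.2}
  have hstep : ∀ x : T, ∃ y : T, ∃ gpc ∈ PiPieces (m'+1) d, gpc ≠ [] ∧
      y.1.1 = x.1.1 ++ gpc := by
    rintro ⟨⟨b, c⟩, hx⟩
    obtain ⟨gpc, c', hmem, hne, hNT'⟩ := NTp_piece E M₁ ρ₀ s hd hρ₀ hfair hx
    exact ⟨⟨(b ++ gpc, c'), hNT'⟩, gpc, hmem, hne, rfl⟩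
  choose f gp hgmem hgne hgeq using hstep
  let x0 : T := ⟨([], 0), hNT⟩
  let chain : ℕ → T := fun t => f^[t] x0
  have hchain_succ : ∀ t, chain (t+1) = f (chain t) := fun t =>
    Function.iterate_succ_apply' f t x0
  set gs : ℕ → List (Fin (m'+1)) := fun t => gp (chain t) with hgs
  have hbs : ∀ t, (chain t).1.1 = ((List.range t).map gs).flatten := by
    intro t
    induction t with
    | zero => rfl
    | succ t ih =>
        rw [hchain_succ, hgeq (chain t), ih, List.range_succ]
        simp [hgs]
  have hglen : ∀ t, 1 ≤ (gs t).length := fun t => List.length_pos_iff.mpr (hgne (chain t))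
  have hlen : ∀ t, t ≤ ((chain t).1.1).length := by
    intro t
    induction t with
    | zero => omega
    | succ t ih =>
        rw [hchain_succ, hgeq (chain t), List.length_append]
        have h2 : 1 ≤ (gp (chain t)).length := hglen t
        omega
  have hbs_prefix : ∀ t t', t ≤ t' → (chain t).1.1 <+: (chain t').1.1 := by
    intro t t' htt
    induction t', htt using Nat.le_induction with
    | base => exact List.prefix_rfl
    | succ t' h ih =>
        refine ih.trans ?_
        rw [hchain_succ, hgeq (chain t')]
        exact ⟨_, rfl⟩
  let s' : ℕ → Fin (m'+1) := fun i => ((chain (i+1)).1.1).getD i (s 0)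
  have hs'pre : ∀ t, prefixOf s' ((chain t).1.1).length = (chain t).1.1 := by
    intro t
    apply List.ext_getElem
    · simp [prefixOf]
    · intro j h1 h2
      have h1' : j < ((chain t).1.1).length := by
        simpa [prefixOf] using h1
      have e1 : (prefixOf s' (((chain t).1.1).length))[j]'h1 = s' j := by
        simp [prefixOf]
      rw [e1]
      have hj1 : j < ((chain (j+1)).1.1).length := lt_of_lt_of_le (Nat.lt_succ_self j) (hlen (j+1))
      show ((chain (j+1)).1.1).getD j (s 0) = _
      rw [List.getD_eq_getElem _ _ hj1]
      rcases le_total (j+1) t with hle | hle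
      · exact (prefix_getElem (hbs_prefix (j+1) t hle) hj1).symm
      · exact prefix_getElem (hbs_prefix t (j+1) hle) h1'
  have hInO : InOmega (PiPieces (m'+1) d) s' := by
    refine ⟨gs, fun t => hgmem (chain t), fun N => ?_⟩
    rw [← hbs N]
    exact hs'pre N
  obtain ⟨N, hzero⟩ := hterm s' hInO
  have hNTN : progFStr E M₁ ((chain N).1.1) ρ₀ ≠ 0 := by
    have := (chain N).2 0
    rwa [seg_zero_len, List.append_nil] at this
  apply hNTN
  have hpfx : prefixOf s' N <+: (chain N).1.1 := by
    rw [← hs'pre N]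
    exact prefixOf_prefix s' (hlen N)
  exact progFStr_zero_of_prefix E M₁ hpfx hzero

end Hard

theorem terminates_fair_iff_terminates_PiOmega {d m n : ℕ}
    (E : Fin m → Fin n → Matrix (Fin d) (Fin d) ℂ)
    (M₀ M₁ : Matrix (Fin d) (Fin d) ℂ)
    (hE : ∀ k, ∑ i, (E k i)ᴴ * E k i = 1)
    (hM : M₀ᴴ * M₀ + M₁ᴴ * M₁ = 1)
    (ρ₀ : Matrix (Fin d) (Fin d) ℂ) (hρ₀ : ρ₀.PosSemidef) (htr : ρ₀.trace ≤ 1) :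
    (∀ s : ℕ → Fin m, Fair s → ∃ N : ℕ, progFStr E M₁ (prefixOf s N) ρ₀ = 0)
      ↔ (∀ s : ℕ → Fin m, InOmega (PiPieces m d) s →
          ∃ N : ℕ, progFStr E M₁ (prefixOf s N) ρ₀ = 0) := by
  constructor
  · intro hfairterm s hs
    exact hfairterm s (inOmega_fair hs)
  · intro hPi s hfair
    have hm : m ≠ 0 := fun h => (h ▸ s 0).elim0
    obtain ⟨m', rfl⟩ : ∃ m', m = m' + 1 := ⟨m - 1, by omega⟩
    exact hard_direction E M₁ ρ₀ hρ₀ hPi s hfair
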